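/- If a vector x in R^n majorizes a vector y in R^n, and f : R → R is concave, then the sum of f(x_i) over i is less than or equal to the sum of f(y_i) over i. -/

import Mathlib

open Finset

/-- Sum of the `k` largest entries of `x`, expressed as the supremum of sums over
subsets of cardinality `k`. -/
noncomputable def topSum {n : ℕ} (x : Fin n → ℝ) (k : ℕ) : ℝ :=
  sSup {r : ℝ | ∃ s : Finset (Fin n), s.card = k ∧ r = ∑ i ∈ s, x i}

/-- `x` majorizes `y`: every partial sum of the sorted-descending version of `x`
dominates that of `y`, and the total sums agree. -/
def Majorizes {n : ℕ} (x y : Fin n → ℝ) : Prop :=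
  (∀ k : ℕ, k < n → topSum y k ≤ topSum x k) ∧ (∑ i, x i = ∑ i, y i)

/-- A concave function on all of `ℝ` admits a supergradient at every point. -/
private lemma karamata_supergrad {f : ℝ → ℝ} (hf : ConcaveOn ℝ Set.univ f) :
    ∃ g : ℝ → ℝ, ∀ t s, f s ≤ f t + g t * (s - t) := by
  classical
  refine ⟨fun t => sInf ((fun u => (f t - f u) / (t - u)) '' Set.Iio t), ?_⟩
  intro t s
  set S := (fun u => (f t - f u) / (t - u)) '' Set.Iio t with hS
  have hne : S.Nonempty := ⟨_, ⟨t - 1, by simp, rfl⟩⟩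
  have hbdd : BddBelow S := by
    refine ⟨(f (t + 1) - f t) / (t + 1 - t), ?_⟩
    rintro r ⟨u, hu, rfl⟩
    have hu' : u < t := hu
    have := hf.slope_anti_adjacent (Set.mem_univ u) (Set.mem_univ (t + 1)) hu' (by linarith)
    simpa using this
  rcases lt_trichotomy s t with hst | hst | hst
  · have hmem : (f t - f s) / (t - s) ∈ S := ⟨s, hst, rfl⟩
    have h1 : sInf S ≤ (f t - f s) / (t - s) := csInf_le hbdd hmem
    have h2 : (f t - f s) / (t - s) * (s - t) = f s - f t := by
      have : t - s ≠ 0 := by linarith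
      field_simp
      ring
    have h3 : (f t - f s) / (t - s) * (s - t) ≤ sInf S * (s - t) :=
      mul_le_mul_of_nonpos_right h1 (by linarith)
    linarith
  · simp [hst]
  · have h1 : (f s - f t) / (s - t) ≤ sInf S := by
      apply le_csInf hne
      rintro r ⟨u, hu, rfl⟩
      have hu' : u < t := hu
      exact hf.slope_anti_adjacent (Set.mem_univ u) (Set.mem_univ s) hu' hst
    have h2 : f s - f t ≤ sInf S * (s - t) := by
      have := mul_le_mul_of_nonneg_right h1 (le_of_lt (sub_pos.2 hst))
      rwa [div_mul_cancel₀] at this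
      linarith
    linarith

/-- For a monotone `a`, any sum over a `k`-element subset is at most the sum of the top
`k` indices. -/
private lemma karamata_sum_le_hi {n k : ℕ} (a : Fin n → ℝ) (ha : Monotone a) (hk : k ≤ n)
    (t : Finset (Fin n)) (ht : t.card = k) :
    ∑ j ∈ t, a j ≤ ∑ j ∈ univ.filter (fun j : Fin n => n - k ≤ (j : ℕ)), a j := by
  classical
  set T := univ.filter (fun j : Fin n => n - k ≤ (j : ℕ)) with hT
  have hTcard : T.card = k := by
    have h1 : T.card = ∑ j : Fin n, if n - k ≤ (j : ℕ) then 1 else 0 := by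
      rw [hT, Finset.card_filter]
    have h2 : (∑ j : Fin n, if n - k ≤ (j : ℕ) then 1 else 0)
        = ∑ i ∈ Finset.range n, if n - k ≤ i then 1 else 0 :=
      Fin.sum_univ_eq_sum_range (fun i => if n - k ≤ i then 1 else 0) n
    have h3 : (∑ i ∈ Finset.range n, if n - k ≤ i then 1 else 0)
        = ((Finset.range n).filter (fun i => n - k ≤ i)).card := by
      rw [Finset.card_filter]
    have h4 : (Finset.range n).filter (fun i => n - k ≤ i) = Finset.Ico (n - k) n := by
      ext i
      simp [Finset.mem_Ico, Finset.mem_range]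
      omega
    rw [h1, h2, h3, h4, Nat.card_Ico]
    omega
  have hcu : (t \ T).card = (T \ t).card := by
    have h1 := Finset.card_sdiff_add_card_inter t T
    have h2 := Finset.card_sdiff_add_card_inter T t
    rw [Finset.inter_comm] at h2
    omega
  let e : (t \ T : Finset (Fin n)) ≃ (T \ t : Finset (Fin n)) := Finset.equivOfCardEq hcu
  have key : ∀ j : (t \ T : Finset (Fin n)), a j ≤ a (e j) := by
    intro j
    have hj : (j : Fin n) ∈ t \ T := j.2
    have hj' : ¬ (n - k ≤ ((j : Fin n) : ℕ)) := by
      have := (Finset.mem_sdiff.1 hj).2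
      simp [hT] at this
      omega
    have hej : (e j : Fin n) ∈ T \ t := (e j).2
    have hej' : n - k ≤ ((e j : Fin n) : ℕ) := by
      have := (Finset.mem_sdiff.1 hej).1
      simpa [hT] using this
    exact ha (by rw [Fin.le_def]; omega)
  have hsum : ∑ j ∈ t \ T, a j ≤ ∑ j ∈ T \ t, a j := by
    rw [← Finset.sum_coe_sort (t \ T), ← Finset.sum_coe_sort (T \ t)]
    calc ∑ j : (t \ T : Finset (Fin n)), a j
        ≤ ∑ j : (t \ T : Finset (Fin n)), a (e j) := Finset.sum_le_sum fun j _ => key j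
      _ = ∑ j : (T \ t : Finset (Fin n)), a j := Equiv.sum_comp e (fun j => a j)
  have h5 := Finset.sum_inter_add_sum_sdiff t T a
  have h6 := Finset.sum_inter_add_sum_sdiff T t a
  rw [Finset.inter_comm] at h6
  linarith

/-- `topSum x k` equals the sum of the top `k` entries of the ascending sort of `x`. -/
private lemma karamata_topSum_eq {n : ℕ} (x : Fin n → ℝ) (k : ℕ) (hk : k ≤ n) :
    topSum x k = ∑ j ∈ univ.filter (fun j : Fin n => n - k ≤ (j : ℕ)),
      x (Tuple.sort x j) := by
  classical
  set σ := Tuple.sort x with hσ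
  set a : Fin n → ℝ := fun j => x (σ j) with haa
  have ha : Monotone a := Tuple.monotone_sort x
  set T := univ.filter (fun j : Fin n => n - k ≤ (j : ℕ)) with hT
  have hTcard : T.card = k := by
    have h1 : T.card = ∑ j : Fin n, if n - k ≤ (j : ℕ) then 1 else 0 := by
      rw [hT, Finset.card_filter]
    have h2 : (∑ j : Fin n, if n - k ≤ (j : ℕ) then 1 else 0)
        = ∑ i ∈ Finset.range n, if n - k ≤ i then 1 else 0 :=
      Fin.sum_univ_eq_sum_range (fun i => if n - k ≤ i then 1 else 0) n
    have h3 : (∑ i ∈ Finset.range n, if n - k ≤ i then 1 else 0)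
        = ((Finset.range n).filter (fun i => n - k ≤ i)).card := by
      rw [Finset.card_filter]
    have h4 : (Finset.range n).filter (fun i => n - k ≤ i) = Finset.Ico (n - k) n := by
      ext i
      simp [Finset.mem_Ico, Finset.mem_range]
      omega
    rw [h1, h2, h3, h4, Nat.card_Ico]
    omega
  set Sset := {r : ℝ | ∃ s : Finset (Fin n), s.card = k ∧ r = ∑ i ∈ s, x i} with hSset
  have hmem : (∑ j ∈ T, a j) ∈ Sset := by
    refine ⟨T.image σ, ?_, ?_⟩
    · rw [Finset.card_image_of_injective _ σ.injective, hTcard]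
    · rw [Finset.sum_image (fun i _ j _ h => σ.injective h)]
  have hfin : Sset.Finite := by
    apply Set.Finite.subset (Set.finite_range (fun s : Finset (Fin n) => ∑ i ∈ s, x i))
    rintro r ⟨s, _, rfl⟩
    exact ⟨s, rfl⟩
  have hbdd : BddAbove Sset := hfin.bddAbove
  apply le_antisymm
  · apply csSup_le ⟨_, hmem⟩
    rintro r ⟨s, hs, rfl⟩
    have him : (s.image σ.symm).card = k := by
      rw [Finset.card_image_of_injective _ σ.symm.injective, hs]
    have heq : ∑ j ∈ s.image σ.symm, a j = ∑ i ∈ s, x i := by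
      rw [Finset.sum_image (fun i _ j _ h => σ.symm.injective h)]
      apply Finset.sum_congr rfl
      intro i _
      simp [haa]
    rw [← heq]
    exact karamata_sum_le_hi a ha hk _ him
  · exact le_csSup hbdd hmem

/-- Partial (ascending) sums comparison derived from the majorization hypothesis. -/
private lemma karamata_low_sums {n : ℕ} (x y : Fin n → ℝ) (hmaj : Majorizes x y)
    (k : ℕ) (hk1 : 1 ≤ k) (hk2 : k ≤ n) :
    ∑ j ∈ univ.filter (fun j : Fin n => (j : ℕ) < k), x (Tuple.sort x j)
      ≤ ∑ j ∈ univ.filter (fun j : Fin n => (j : ℕ) < k), y (Tuple.sort y j) := by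
  classical
  set a : Fin n → ℝ := fun j => x (Tuple.sort x j) with haa
  set b : Fin n → ℝ := fun j => y (Tuple.sort y j) with hbb
  have hsplit : ∀ z : Fin n → ℝ,
      (∑ j ∈ univ.filter (fun j : Fin n => (j : ℕ) < k), z j)
        + ∑ j ∈ univ.filter (fun j : Fin n => n - (n - k) ≤ (j : ℕ)), z j = ∑ j, z j := by
    intro z
    have h1 : (univ.filter (fun j : Fin n => n - (n - k) ≤ (j : ℕ)))
        = univ.filter (fun j : Fin n => ¬ ((j : ℕ) < k)) := by
      apply Finset.filter_congr
      intro j _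
      constructor <;> intro h <;> omega
    rw [h1]
    exact Finset.sum_filter_add_sum_filter_not univ _ z
  have hxa : ∑ j, a j = ∑ i, x i := Equiv.sum_comp (Tuple.sort x) x
  have hyb : ∑ j, b j = ∑ i, y i := Equiv.sum_comp (Tuple.sort y) y
  have htx := karamata_topSum_eq x (n - k) (by omega)
  have hty := karamata_topSum_eq y (n - k) (by omega)
  have hmono := hmaj.1 (n - k) (by omega)
  rw [htx, hty] at hmono
  have hsx := hsplit a
  have hsy := hsplit b
  have htot : ∑ j, a j = ∑ j, b j := by rw [hxa, hyb, hmaj.2]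
  -- hmono : sum over hi of b ≤ sum over hi of a
  linarith [hmono, hsx, hsy, htot]

/-- Karamata's inequality for concave functions. -/
theorem karamata_concave {n : ℕ} (x y : Fin n → ℝ) (f : ℝ → ℝ)
    (hmaj : Majorizes x y) (hf : ConcaveOn ℝ Set.univ f) :
    ∑ i, f (x i) ≤ ∑ i, f (y i) := by
  classical
  rcases Nat.eq_zero_or_pos n with hn | hn
  · subst hn; simp
  set a : Fin n → ℝ := fun j => x (Tuple.sort x j) with haa
  set b : Fin n → ℝ := fun j => y (Tuple.sort y j) with hbb
  have ha : Monotone a := Tuple.monotone_sort x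
  have hb : Monotone b := Tuple.monotone_sort y
  obtain ⟨g, hg⟩ := karamata_supergrad hf
  have hganti : ∀ s t : ℝ, s ≤ t → g t ≤ g s := by
    intro s t hst
    rcases eq_or_lt_of_le hst with rfl | hlt
    · exact le_rfl
    · have h1 := hg t s
      have h2 := hg s t
      have h3 : 0 ≤ (g s - g t) * (t - s) := by nlinarith [h1, h2]
      have h4 : 0 ≤ g s - g t := by
        by_contra h
        push_neg at h
        nlinarith [h3, hlt, mul_pos (sub_pos.2 hlt) (sub_pos.2 (by linarith : g t - g s > 0))]
      linarith
  -- rewrite sums through the sorting permutations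
  have hxa : ∑ i, f (x i) = ∑ i, f (a i) := (Equiv.sum_comp (Tuple.sort x) (fun i => f (x i))).symm
  have hyb : ∑ i, f (y i) = ∑ i, f (b i) := (Equiv.sum_comp (Tuple.sort y) (fun i => f (y i))).symm
  rw [hxa, hyb]
  have hstep : ∑ i, f (a i) ≤ ∑ i, f (b i) + ∑ i, g (b i) * (a i - b i) := by
    rw [← Finset.sum_add_distrib]
    exact Finset.sum_le_sum fun i _ => hg (b i) (a i)
  -- it remains to show the correction term is nonpositive
  set c : ℕ → ℝ := fun i => g (b ⟨min i (n - 1), by omega⟩) with hcc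
  set d : ℕ → ℝ := fun i => if h : i < n then a ⟨i, h⟩ - b ⟨i, h⟩ else 0 with hdd
  have hcd : ∑ i, g (b i) * (a i - b i) = ∑ i ∈ Finset.range n, c i * d i := by
    rw [← Fin.sum_univ_eq_sum_range (fun i => c i * d i) n]
    apply Finset.sum_congr rfl
    intro i _
    have h1 : (⟨min (i : ℕ) (n - 1), by omega⟩ : Fin n) = i := by
      apply Fin.ext
      simp
      omega
    have h2 : c (i : ℕ) = g (b i) := by rw [hcc]; simp only []; rw [h1]
    have h3 : d (i : ℕ) = a i - b i := by
      rw [hdd]; simp only [dif_pos i.isLt]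
    rw [h2, h3]
  -- partial sums of d
  have hD : ∀ m, m ≤ n → ∑ j ∈ Finset.range m, d j
      = (∑ j ∈ univ.filter (fun j : Fin n => (j : ℕ) < m), a j)
        - ∑ j ∈ univ.filter (fun j : Fin n => (j : ℕ) < m), b j := by
    intro m hm
    have h4 : (Finset.range n).filter (fun i => i < m) = Finset.range m := by
      ext i
      simp only [Finset.mem_filter, Finset.mem_range]
      omega
    calc ∑ j ∈ Finset.range m, d j
        = ∑ i ∈ (Finset.range n).filter (fun i => i < m), d i := by rw [h4]
      _ = ∑ i ∈ Finset.range n, if i < m then d i else 0 := Finset.sum_filter _ _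
      _ = ∑ j : Fin n, if ((j : ℕ) < m) then d (j : ℕ) else 0 :=
          (Fin.sum_univ_eq_sum_range (fun i => if i < m then d i else 0) n).symm
      _ = ∑ j : Fin n, if ((j : ℕ) < m) then (a j - b j) else 0 := by
          apply Finset.sum_congr rfl
          intro j _
          by_cases hj : (j : ℕ) < m
          · simp only [if_pos hj]
            rw [hdd]; simp only [dif_pos j.isLt]
          · simp [hj]
      _ = ∑ j ∈ univ.filter (fun j : Fin n => (j : ℕ) < m), (a j - b j) :=
          (Finset.sum_filter _ _).symm
      _ = (∑ j ∈ univ.filter (fun j : Fin n => (j : ℕ) < m), a j)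
          - ∑ j ∈ univ.filter (fun j : Fin n => (j : ℕ) < m), b j :=
          Finset.sum_sub_distrib _ _
  -- total sum of d is zero
  have hDn : ∑ j ∈ Finset.range n, d j = 0 := by
    rw [hD n le_rfl]
    have hfull : univ.filter (fun j : Fin n => (j : ℕ) < n) = univ := by
      apply Finset.filter_true_of_mem
      intro j _
      exact j.isLt
    rw [hfull]
    have hxa' : ∑ j, a j = ∑ i, x i := Equiv.sum_comp (Tuple.sort x) x
    have hyb' : ∑ j, b j = ∑ i, y i := Equiv.sum_comp (Tuple.sort y) y
    rw [hxa', hyb', hmaj.2]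
    ring
  -- Abel summation
  have habel := Finset.sum_range_by_parts c d n
  simp only [smul_eq_mul] at habel
  have hcorr : ∑ i ∈ Finset.range n, c i * d i ≤ 0 := by
    rw [habel, hDn, mul_zero, zero_sub, neg_nonpos]
    apply Finset.sum_nonneg
    intro i hi
    have hi' : i < n - 1 := Finset.mem_range.1 hi
    have hcle : c (i + 1) - c i ≤ 0 := by
      have hble : b ⟨min i (n - 1), by omega⟩ ≤ b ⟨min (i + 1) (n - 1), by omega⟩ := by
        apply hb
        simp only [Fin.mk_le_mk]
        omega
      have := hganti _ _ hble
      rw [hcc]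
      simp only [sub_nonpos]
      exact this
    have hDle : ∑ j ∈ Finset.range (i + 1), d j ≤ 0 := by
      rw [hD (i + 1) (by omega)]
      have := karamata_low_sums x y hmaj (i + 1) (by omega) (by omega)
      rw [← haa, ← hbb] at this
      linarith
    nlinarith [hcle, hDle]
  rw [hcd] at hstep
  linarith
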